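/- For the LPAA model with c₂ = 0 and R₀ = b(1-μ_l)(1-μ_p)/μ_a satisfying 1 < R₀ < e, every solution of the associated delay equation x_{t+1} = (1-μ_a)x_t + β·x_{t-3}·exp(-c₁x_{t-3}) with strictly positive initial history converges to x* = (1/c₁)·ln R₀, where β = b(1-μ_l)(1-μ_p). -/

import Mathlib

open Real Filter


private lemma texp_le (t : ℝ) (ht : 0 ≤ t) : t * Real.exp (-t) ≤ Real.exp (-1) := by
  have h1 : t ≤ Real.exp (t - 1) := by
    have := Real.add_one_le_exp (t - 1); linarith
  calc t * Real.exp (-t) ≤ Real.exp (t - 1) * Real.exp (-t) := by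
        exact mul_le_mul_of_nonneg_right h1 (Real.exp_pos _).le
    _ = Real.exp (-1) := by rw [← Real.exp_add]; ring_nf

private lemma texp_mono {s t : ℝ} (hs : 0 ≤ s) (hst : s ≤ t) (ht : t ≤ 1) :
    s * Real.exp (-s) ≤ t * Real.exp (-t) := by
  have h2 : (1 : ℝ) - (t - s) ≤ Real.exp (-(t - s)) := by
    have := Real.add_one_le_exp (-(t - s)); linarith
  have h3 : s ≤ t * Real.exp (-(t - s)) := by
    have h1 : s ≤ t * (1 - (t - s)) := by nlinarith
    have := mul_le_mul_of_nonneg_left h2 (hs.trans hst)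
    linarith
  calc s * Real.exp (-s) ≤ (t * Real.exp (-(t - s))) * Real.exp (-s) :=
        mul_le_mul_of_nonneg_right h3 (Real.exp_pos _).le
    _ = t * Real.exp (-t) := by rw [mul_assoc, ← Real.exp_add]; ring_nf

private lemma contract (a C : ℝ) (ha : 0 < a) (ha1 : a < 1) (x : ℕ → ℝ) (T : ℕ)
    (hx : ∀ t, T ≤ t → x (t + 1) ≤ (1 - a) * x t + a * C) (ε : ℝ) (hε : 0 < ε) :
    ∃ T', ∀ t, T' ≤ t → x t ≤ C + ε := by
  set q := 1 - a with hq
  have hq0 : 0 ≤ q := by simp [hq]; linarith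
  have hq1 : q < 1 := by simp [hq]; linarith
  set m := max (x T - C) 0 with hm
  have hm0 : 0 ≤ m := le_max_right _ _
  have key : ∀ n, x (T + n) ≤ C + q ^ n * m := by
    intro n
    induction n with
    | zero =>
      have := le_max_left (x T - C) 0
      simp only [pow_zero, one_mul, Nat.add_zero]
      linarith
    | succ n ih =>
      have h1 := hx (T + n) (Nat.le_add_right _ _)
      have h2 : q * x (T + n) ≤ q * (C + q ^ n * m) :=
        mul_le_mul_of_nonneg_left ih hq0
      have h3 : x (T + (n + 1)) = x ((T + n) + 1) := by ring_nf
      rw [h3, pow_succ]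
      calc x ((T + n) + 1) ≤ q * (C + q ^ n * m) + a * C := by linarith
        _ = C + (q ^ n * q) * m := by rw [hq]; ring
  have htend : Tendsto (fun n => q ^ n * m) atTop (nhds 0) := by
    simpa using (tendsto_pow_atTop_nhds_zero_of_lt_one hq0 hq1).mul_const m
  obtain ⟨N, hN⟩ := (htend.eventually_lt_const hε).exists_forall_of_atTop
  refine ⟨T + N, fun t ht => ?_⟩
  obtain ⟨k, rfl⟩ := Nat.exists_eq_add_of_le ht
  have hk : N ≤ N + k := Nat.le_add_right _ _
  have h4 : q ^ (N + k) * m ≤ q ^ N * m :=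
    mul_le_mul_of_nonneg_right (pow_le_pow_of_le_one hq0 hq1.le hk) hm0
  have h5 := key (N + k)
  have h6 := hN N le_rfl
  calc x (T + N + k) = x (T + (N + k)) := by ring_nf
    _ ≤ C + q ^ (N + k) * m := key _
    _ ≤ C + q ^ N * m := by linarith
    _ ≤ C + ε := by linarith

private lemma contract' (a C : ℝ) (ha : 0 < a) (ha1 : a < 1) (x : ℕ → ℝ) (T : ℕ)
    (hx : ∀ t, T ≤ t → (1 - a) * x t + a * C ≤ x (t + 1)) (ε : ℝ) (hε : 0 < ε) :
    ∃ T', ∀ t, T' ≤ t → C - ε ≤ x t := by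
  obtain ⟨T', h⟩ := contract a (-C) ha ha1 (fun t => -x t) T
    (fun t ht => by have := hx t ht; linarith) ε hε
  exact ⟨T', fun t ht => by have := h t ht; linarith⟩

set_option maxHeartbeats 2000000 in
theorem stmt_19 (b c₁ μl μp μa : ℝ)
    (hb : 0 < b) (hc₁ : 0 < c₁)
    (hμl : μl ∈ Set.Ioo (0:ℝ) 1) (hμp : μp ∈ Set.Ioo (0:ℝ) 1) (hμa : μa ∈ Set.Ioo (0:ℝ) 1)
    (β R₀ : ℝ) (hβ : β = b * (1 - μl) * (1 - μp)) (hR₀def : R₀ = β / μa)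
    (hR₀ : 1 < R₀) (hR₀e : R₀ < Real.exp 1)
    (x : ℕ → ℝ)
    (hpos : 0 < x 0 ∧ 0 < x 1 ∧ 0 < x 2 ∧ 0 < x 3)
    (hrec : ∀ t, x (t + 4) = (1 - μa) * x (t + 3) + β * x t * Real.exp (-c₁ * x t)) :
    Tendsto x atTop (nhds ((1 / c₁) * Real.log R₀)) := by
  obtain ⟨hμa0, hμa1⟩ := hμa
  have hβ0 : 0 < β := by
    rw [hβ]; exact mul_pos (mul_pos hb (by linarith [hμl.2])) (by linarith [hμp.2])
  have hR0pos : 0 < R₀ := lt_trans one_pos hR₀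
  have hβa : β = μa * R₀ := by rw [hR₀def]; field_simp
  set r := Real.log R₀ with hrdef
  have hr0 : 0 < r := Real.log_pos hR₀
  have hr1 : r < 1 := by
    calc r < Real.log (Real.exp 1) := Real.log_lt_log hR0pos hR₀e
      _ = 1 := Real.log_exp 1
  have hexpr : Real.exp r = R₀ := Real.exp_log hR0pos
  set xs := r / c₁ with hxsdef
  have hxs0 : 0 < xs := div_pos hr0 hc₁
  set K := 1 / c₁ with hKdef
  have hxsK : xs < K := by
    rw [hxsdef, hKdef]; exact div_lt_div_of_pos_right hr1 hc₁
  set M := R₀ * Real.exp (-1) / c₁ with hMdef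
  have hM0 : 0 < M := by positivity
  have hMK : M < K := by
    have h : R₀ * Real.exp (-1) < 1 := by
      rw [Real.exp_neg, ← div_eq_mul_inv]
      exact (div_lt_one (Real.exp_pos 1)).2 hR₀e
    rw [hMdef, hKdef]
    exact div_lt_div_of_pos_right h hc₁
  set H : ℝ → ℝ := fun y => R₀ * y * Real.exp (-c₁ * y) with hHdef
  have hc₁ne : c₁ ≠ 0 := ne_of_gt hc₁
  have Hfix : H xs = xs := by
    rw [hHdef]; simp only
    rw [hxsdef]
    have : -c₁ * (r / c₁) = -r := by field_simp
    rw [this, Real.exp_neg, hexpr]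
    field_simp
  have Hmono : ∀ s t : ℝ, 0 ≤ s → s ≤ t → t ≤ K → H s ≤ H t := by
    intro s t hs hst ht
    have h1 : c₁ * t ≤ 1 := by
      rw [hKdef] at ht
      calc c₁ * t ≤ c₁ * (1 / c₁) := mul_le_mul_of_nonneg_left ht hc₁.le
        _ = 1 := by field_simp
    have h2 := texp_mono (mul_nonneg hc₁.le hs) (mul_le_mul_of_nonneg_left hst hc₁.le) h1
    have h3 : H s = (R₀ / c₁) * ((c₁ * s) * Real.exp (-(c₁ * s))) := by
      rw [hHdef]; simp only; field_simp
    have h4 : H t = (R₀ / c₁) * ((c₁ * t) * Real.exp (-(c₁ * t))) := by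
      rw [hHdef]; simp only; field_simp
    rw [h3, h4]
    exact mul_le_mul_of_nonneg_left h2 (by positivity)
  have Hle : ∀ y : ℝ, 0 ≤ y → H y ≤ M := by
    intro y hy
    have h2 := texp_le (c₁ * y) (mul_nonneg hc₁.le hy)
    have h3 : H y = (R₀ / c₁) * ((c₁ * y) * Real.exp (-(c₁ * y))) := by
      rw [hHdef]; simp only; field_simp
    rw [h3, hMdef]
    calc (R₀ / c₁) * ((c₁ * y) * Real.exp (-(c₁ * y))) ≤ (R₀ / c₁) * Real.exp (-1) :=
          mul_le_mul_of_nonneg_left h2 (by positivity)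
      _ = R₀ * Real.exp (-1) / c₁ := by ring
  have Hpos : ∀ y : ℝ, 0 < y → 0 < H y := by
    intro y hy; rw [hHdef]; positivity
  have Hrec : ∀ t, x (t + 4) = (1 - μa) * x (t + 3) + μa * H (x t) := by
    intro t; rw [hrec t, hHdef]; simp only; rw [hβa]; ring
  -- positivity of all x t
  have hposall : ∀ t, 0 < x t := by
    intro t
    induction t using Nat.strong_induction_on with
    | _ t ih =>
      match t with
      | 0 => exact hpos.1
      | 1 => exact hpos.2.1
      | 2 => exact hpos.2.2.1
      | 3 => exact hpos.2.2.2
      | (n + 4) =>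
        rw [Hrec n]
        have h1 : 0 < x (n + 3) := ih (n + 3) (by omega)
        have h2 : 0 < x n := ih n (by omega)
        have h3 : 0 < H (x n) := Hpos _ h2
        nlinarith
  -- step bound : one-step inequality toward M
  have hstepM : ∀ s, 3 ≤ s → x (s + 1) ≤ (1 - μa) * x s + μa * M := by
    intro s hs
    obtain ⟨n, rfl⟩ := Nat.exists_eq_add_of_le hs
    have h1 : x (3 + n + 1) = x (n + 4) := by ring_nf
    rw [h1, Hrec n]
    have h2 : x (3 + n) = x (n + 3) := by ring_nf
    rw [h2]
    have h3 := Hle (x n) (hposall n).le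
    have h4 := mul_le_mul_of_nonneg_left h3 hμa0.le
    linarith
  -- Step A : eventual upper bound M + ε
  have stepA : ∀ ε : ℝ, 0 < ε → ∃ T, ∀ t, T ≤ t → x t ≤ M + ε := by
    intro ε hε
    exact contract μa M hμa0 hμa1 x 3 hstepM ε hε
  -- boundedness
  obtain ⟨T₁, hT₁⟩ := stepA 1 one_pos
  have hbddA : IsBoundedUnder (· ≤ ·) atTop x :=
    isBoundedUnder_of_eventually_le (eventually_atTop.2 ⟨T₁, hT₁⟩)
  have hbddB : IsBoundedUnder (· ≥ ·) atTop x :=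
    isBoundedUnder_of_eventually_ge (Eventually.of_forall (fun t => (hposall t).le))
  have hcobA : IsCoboundedUnder (· ≤ ·) atTop x := hbddB.isCoboundedUnder_le
  have hcobB : IsCoboundedUnder (· ≥ ·) atTop x := hbddA.isCoboundedUnder_ge
  set L := limsup x atTop with hLdef
  set l := liminf x atTop with hldef
  have hlL : l ≤ L := liminf_le_limsup hbddA hbddB
  have hLM : L ≤ M := by
    apply le_of_forall_pos_le_add
    intro ε hε
    obtain ⟨T, hT⟩ := stepA ε hε
    exact limsup_le_of_le hcobA (eventually_atTop.2 ⟨T, hT⟩)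
  -- persistence
  set ε₀ := (K - M) / 2 with hε₀def
  have hε₀ : 0 < ε₀ := by rw [hε₀def]; linarith
  obtain ⟨T₀, hT₀⟩ := stepA ε₀ hε₀
  set B := M + ε₀ with hBdef
  have hBK : B < K := by rw [hBdef, hε₀def]; linarith
  set δ := min (min (min (x T₀) (x (T₀ + 1))) (min (x (T₀ + 2)) (x (T₀ + 3)))) xs with hδdef
  have hδ0 : 0 < δ := by
    rw [hδdef]
    simp only [lt_min_iff]
    exact ⟨⟨⟨hposall _, hposall _⟩, ⟨hposall _, hposall _⟩⟩, hxs0⟩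
  have hδxs : δ ≤ xs := min_le_right _ _
  have hpers : ∀ n, δ ≤ x (T₀ + n) := by
    intro n
    induction n using Nat.strong_induction_on with
    | _ n ih =>
      match n with
      | 0 => exact le_trans (min_le_left _ _) (le_trans (min_le_left _ _) (min_le_left _ _))
      | 1 => exact le_trans (min_le_left _ _) (le_trans (min_le_left _ _) (min_le_right _ _))
      | 2 => exact le_trans (min_le_left _ _) (le_trans (min_le_right _ _) (min_le_left _ _))
      | 3 => exact le_trans (min_le_left _ _) (le_trans (min_le_right _ _) (min_le_right _ _))
      | (k + 4) =>
        have hidx : T₀ + (k + 4) = (T₀ + k) + 4 := by ring_nf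
        rw [hidx, Hrec (T₀ + k)]
        have ih3 : δ ≤ x ((T₀ + k) + 3) := by
          have := ih (k + 3) (by omega); rw [← Nat.add_assoc] at this; exact this
        have ih0 : δ ≤ x (T₀ + k) := ih k (by omega)
        have hxk : x (T₀ + k) ≤ B := hT₀ (T₀ + k) (Nat.le_add_right _ _)
        have hH : δ ≤ H (x (T₀ + k)) := by
          rcases le_or_gt (x (T₀ + k)) xs with hcase | hcase
          · -- H y ≥ y for y ≤ xs
            have hy0 : 0 < x (T₀ + k) := hposall _
            have he : Real.exp (-r) ≤ Real.exp (-c₁ * x (T₀ + k)) := by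
              apply Real.exp_le_exp.2
              have : c₁ * x (T₀ + k) ≤ c₁ * xs := mul_le_mul_of_nonneg_left hcase hc₁.le
              have hxsr : c₁ * xs = r := by rw [hxsdef]; field_simp
              linarith
            have hinv : Real.exp (-r) = R₀⁻¹ := by rw [Real.exp_neg, hexpr]
            have : x (T₀ + k) ≤ H (x (T₀ + k)) := by
              rw [hHdef]; simp only
              calc x (T₀ + k) = R₀ * x (T₀ + k) * R₀⁻¹ := by field_simp
                _ = R₀ * x (T₀ + k) * Real.exp (-r) := by rw [hinv]
                _ ≤ R₀ * x (T₀ + k) * Real.exp (-c₁ * x (T₀ + k)) := by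
                    apply mul_le_mul_of_nonneg_left he (by positivity)
            linarith [ih0]
          · have := Hmono xs (x (T₀ + k)) hxs0.le hcase.le (le_trans hxk hBK.le)
            rw [Hfix] at this
            linarith
        have p1 := mul_le_mul_of_nonneg_left ih3 (by linarith : (0:ℝ) ≤ 1 - μa)
        have p2 := mul_le_mul_of_nonneg_left hH hμa0.le
        linarith
  have hlδ : δ ≤ l := by
    apply le_liminf_of_le hcobB
    apply eventually_atTop.2
    refine ⟨T₀, fun t ht => ?_⟩
    obtain ⟨n, rfl⟩ := Nat.exists_eq_add_of_le ht
    exact hpers n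
  have hl0 : 0 < l := lt_of_lt_of_le hδ0 hlδ
  -- L ≤ xs
  have hLxs : L ≤ xs := by
    by_contra hcon
    push_neg at hcon
    set ρ := R₀ * Real.exp (-c₁ * L) with hρdef
    have hρ0 : 0 < ρ := by rw [hρdef]; positivity
    have hρ1 : ρ < 1 := by
      rw [hρdef]
      have h1 : Real.exp (-c₁ * L) < Real.exp (-r) := by
        apply Real.exp_lt_exp.2
        have : r < c₁ * L := by
          have hxsr : c₁ * xs = r := by rw [hxsdef]; field_simp
          nlinarith [mul_lt_mul_of_pos_left hcon hc₁]
        linarith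
      have h2 : Real.exp (-r) = R₀⁻¹ := by rw [Real.exp_neg, hexpr]
      calc R₀ * Real.exp (-c₁ * L) < R₀ * R₀⁻¹ := by
            rw [← h2]; exact mul_lt_mul_of_pos_left h1 hR0pos
        _ = 1 := by field_simp
    have hL0 : 0 < L := lt_of_lt_of_le hl0 hlL
    have keyL : ∀ ε : ℝ, 0 < ε → ε ≤ ε₀ → L ≤ ρ * L + ρ * ε := by
      intro ε hε hεε₀
      have hev : ∀ᶠ t in atTop, x t < L + ε :=
        eventually_lt_of_limsup_lt (by linarith) hbddA
      obtain ⟨T₂, hT₂⟩ := eventually_atTop.1 hev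
      have hstep : ∀ s, T₂ + 3 ≤ s → x (s + 1) ≤ (1 - μa) * x s + μa * H (L + ε) := by
        intro s hs
        obtain ⟨k, rfl⟩ := Nat.exists_eq_add_of_le hs
        have h1 : T₂ + 3 + k + 1 = (T₂ + k) + 4 := by ring_nf -- check
        have h2 : T₂ + 3 + k = (T₂ + k) + 3 := by ring_nf
        rw [h1, h2, Hrec (T₂ + k)]
        have h3 : H (x (T₂ + k)) ≤ H (L + ε) := by
          apply Hmono _ _ (hposall _).le (hT₂ (T₂ + k) (Nat.le_add_right _ _)).le
          have hb1 : ε₀ = (K - M) / 2 := hε₀def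
          linarith
        have p2 := mul_le_mul_of_nonneg_left h3 hμa0.le
        linarith
      have hLle : ∀ ε' : ℝ, 0 < ε' → L ≤ H (L + ε) + ε' := by
        intro ε' hε'
        obtain ⟨T', hT'⟩ := contract μa (H (L + ε)) hμa0 hμa1 x (T₂ + 3) hstep ε' hε'
        exact limsup_le_of_le hcobA (eventually_atTop.2 ⟨T', hT'⟩)
      have hLH : L ≤ H (L + ε) := le_of_forall_pos_le_add hLle
      have hHb : H (L + ε) ≤ ρ * (L + ε) := by
        rw [hHdef, hρdef]; simp only
        have h1 : Real.exp (-c₁ * (L + ε)) ≤ Real.exp (-c₁ * L) := by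
          apply Real.exp_le_exp.2; nlinarith
        calc R₀ * (L + ε) * Real.exp (-c₁ * (L + ε))
            ≤ R₀ * (L + ε) * Real.exp (-c₁ * L) := by
              apply mul_le_mul_of_nonneg_left h1 (by positivity)
          _ = R₀ * Real.exp (-c₁ * L) * (L + ε) := by ring
      have hexpand : ρ * (L + ε) = ρ * L + ρ * ε := by ring
      linarith
    set ε := min ε₀ (L * (1 - ρ) / (2 * ρ)) with hεdef
    have hε : 0 < ε := by
      rw [hεdef]
      exact lt_min hε₀ (div_pos (mul_pos hL0 (by linarith)) (by positivity))
    have h1 := keyL ε hε (min_le_left _ _)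
    have h2 : ρ * ε ≤ L * (1 - ρ) / 2 := by
      have : ε ≤ L * (1 - ρ) / (2 * ρ) := min_le_right _ _
      calc ρ * ε ≤ ρ * (L * (1 - ρ) / (2 * ρ)) := mul_le_mul_of_nonneg_left this hρ0.le
        _ = L * (1 - ρ) / 2 := by field_simp
    nlinarith [mul_pos hL0 (by linarith : (0:ℝ) < 1 - ρ)]
  -- xs ≤ l
  have hlxs : xs ≤ l := by
    by_contra hcon
    push_neg at hcon
    set ρ := R₀ * Real.exp (-c₁ * l) with hρdef
    have hρ0 : 0 < ρ := by rw [hρdef]; positivity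
    have hρ1 : 1 < ρ := by
      rw [hρdef]
      have h1 : Real.exp (-r) < Real.exp (-c₁ * l) := by
        apply Real.exp_lt_exp.2
        have : c₁ * l < r := by
          have hxsr : c₁ * xs = r := by rw [hxsdef]; field_simp
          nlinarith [mul_lt_mul_of_pos_left hcon hc₁]
        linarith
      have h2 : Real.exp (-r) = R₀⁻¹ := by rw [Real.exp_neg, hexpr]
      calc (1:ℝ) = R₀ * R₀⁻¹ := by field_simp
        _ = R₀ * Real.exp (-r) := by rw [h2]
        _ < R₀ * Real.exp (-c₁ * l) := mul_lt_mul_of_pos_left h1 hR0pos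
    have keyl : ∀ ε : ℝ, 0 < ε → ε < l → ρ * (l - ε) ≤ l := by
      intro ε hε hεl
      have hev : ∀ᶠ t in atTop, l - ε < x t :=
        eventually_lt_of_lt_liminf (by linarith) hbddB
      obtain ⟨T₃, hT₃⟩ := eventually_atTop.1 hev
      set T₄ := max T₃ T₀ with hT₄def
      have hstep : ∀ s, T₄ + 3 ≤ s → (1 - μa) * x s + μa * H (l - ε) ≤ x (s + 1) := by
        intro s hs
        obtain ⟨k, rfl⟩ := Nat.exists_eq_add_of_le hs
        have h1 : T₄ + 3 + k + 1 = (T₄ + k) + 4 := by ring_nf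
        have h2 : T₄ + 3 + k = (T₄ + k) + 3 := by ring_nf
        rw [h1, h2, Hrec (T₄ + k)]
        have h3 : H (l - ε) ≤ H (x (T₄ + k)) := by
          apply Hmono _ _ (by linarith) (hT₃ (T₄ + k) (le_trans (le_max_left _ _) (Nat.le_add_right _ _))).le
          exact le_trans (hT₀ (T₄ + k) (le_trans (le_max_right _ _) (Nat.le_add_right _ _))) hBK.le
        have p2 := mul_le_mul_of_nonneg_left h3 hμa0.le
        linarith
      have hlge : ∀ ε' : ℝ, 0 < ε' → H (l - ε) - ε' ≤ l := by
        intro ε' hε'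
        obtain ⟨T', hT'⟩ := contract' μa (H (l - ε)) hμa0 hμa1 x (T₄ + 3) hstep ε' hε'
        exact le_liminf_of_le hcobB (eventually_atTop.2 ⟨T', hT'⟩)
      have hlH : H (l - ε) ≤ l := by
        apply le_of_forall_pos_le_add
        intro ε' hε'
        have := hlge ε' hε'
        linarith
      have hHb : ρ * (l - ε) ≤ H (l - ε) := by
        rw [hHdef, hρdef]; simp only
        have h1 : Real.exp (-c₁ * l) ≤ Real.exp (-c₁ * (l - ε)) := by
          apply Real.exp_le_exp.2; nlinarith
        calc R₀ * Real.exp (-c₁ * l) * (l - ε) = R₀ * (l - ε) * Real.exp (-c₁ * l) := by ring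
          _ ≤ R₀ * (l - ε) * Real.exp (-c₁ * (l - ε)) := by
              exact mul_le_mul_of_nonneg_left h1 (mul_nonneg hR0pos.le (by linarith))
      linarith
    set ε := min (l / 2) (l * (ρ - 1) / (2 * ρ)) with hεdef
    have hε : 0 < ε := by
      rw [hεdef]
      exact lt_min (by linarith) (div_pos (mul_pos hl0 (by linarith)) (by positivity))
    have hεl : ε < l := lt_of_le_of_lt (min_le_left _ _) (by linarith)
    have h1 := keyl ε hε hεl
    have h2 : ρ * ε ≤ l * (ρ - 1) / 2 := by
      have : ε ≤ l * (ρ - 1) / (2 * ρ) := min_le_right _ _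
      calc ρ * ε ≤ ρ * (l * (ρ - 1) / (2 * ρ)) := mul_le_mul_of_nonneg_left this hρ0.le
        _ = l * (ρ - 1) / 2 := by field_simp
    nlinarith [mul_pos hl0 (by linarith : (0:ℝ) < ρ - 1)]
  -- finish
  have hleq : l = xs := le_antisymm (le_trans hlL hLxs) hlxs
  have hLeq : L = xs := le_antisymm hLxs (le_trans hlxs hlL)
  have hgoal : (1 / c₁) * Real.log R₀ = xs := by rw [hxsdef, hrdef]; ring
  rw [hgoal]
  exact tendsto_of_liminf_eq_limsup hleq hLeq hbddA hbddB
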